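/- Let A be a Hom-finite k-linear abelian category over an algebraically closed field k, and let Z be a stability function on A. If S is a Z-stable object of A, then End_A(S) ≅ k. -/

import Mathlib

open CategoryTheory CategoryTheory.Limits
open scoped ZeroObject

universe v u

namespace HWPaper

variable {C : Type u} [Category.{v} C]

variable (C) in
/-- The subgroup of relations coming from short exact sequences. -/
def K0Relations [Abelian C] : AddSubgroup (FreeAbelianGroup C) :=
  AddSubgroup.closure {x | ∃ S : ShortComplex C, S.ShortExact ∧
    x = FreeAbelianGroup.of S.X₂ - FreeAbelianGroup.of S.X₁ - FreeAbelianGroup.of S.X₃}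

variable (C) in
/-- The Grothendieck group of an abelian category. -/
def K0 [Abelian C] : Type u := FreeAbelianGroup C ⧸ K0Relations C

noncomputable instance [Abelian C] : AddCommGroup (K0 C) :=
  QuotientAddGroup.Quotient.addCommGroup _

/-- The class of an object in the Grothendieck group. -/
def K0.cls [Abelian C] (X : C) : K0 C := QuotientAddGroup.mk (FreeAbelianGroup.of X)

/-- The upper half plane with the positive real axis removed:
`ℍ = { r·exp(iπφ) | r > 0, φ ∈ (0,1] }`, i.e. the set of nonzero complex numbers
whose argument lies in `(0, π]`. -/
def stabilityHalfPlane : Set ℂ := {z | 0 < z.arg}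

/-- The phase `φ(z) ∈ (0,1]` of an element `z = r·exp(iπφ(z))` of `ℍ`. -/
noncomputable def phase (z : ℂ) : ℝ := z.arg / Real.pi

/-- A stability function on an abelian category: an additive homomorphism
`Z : K(A) → ℂ` sending every nonzero object into the half plane `ℍ`. -/
def IsStabilityFunction [Abelian C] (Z : K0 C →+ ℂ) : Prop :=
  ∀ X : C, ¬ IsZero X → Z (K0.cls X) ∈ stabilityHalfPlane

/-- An object is `Z`-semistable if every nonzero proper subobject has phase at most
that of the object. -/
def IsZSemistable [Abelian C] (Z : K0 C →+ ℂ) (X : C) : Prop :=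
  ¬ IsZero X ∧ ∀ ⦃Y : C⦄ (f : Y ⟶ X), Mono f → ¬ IsZero Y → ¬ IsIso f →
    phase (Z (K0.cls Y)) ≤ phase (Z (K0.cls X))

/-- An object is `Z`-stable if every nonzero proper subobject has phase strictly less
than that of the object. -/
def IsZStable [Abelian C] (Z : K0 C →+ ℂ) (X : C) : Prop :=
  ¬ IsZero X ∧ ∀ ⦃Y : C⦄ (f : Y ⟶ X), Mono f → ¬ IsZero Y → ¬ IsIso f →
    phase (Z (K0.cls Y)) < phase (Z (K0.cls X))

/-- A Harder–Narasimhan filtration of `X`: a filtration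
`0 = F 0 ⊂ F 1 ⊂ ⋯ ⊂ F d = X` whose factors (the cokernels of the inclusions) are
`Z`-semistable of strictly decreasing phase. -/
structure HNFiltration [Abelian C] (Z : K0 C →+ ℂ) (X : C) where
  /-- the length of the filtration -/
  d : ℕ
  /-- the filtration steps -/
  F : Fin (d + 1) → C
  isZero_bot : IsZero (F 0)
  top_iso : Nonempty (F (Fin.last d) ≅ X)
  /-- the inclusion maps -/
  f : ∀ l : Fin d, F l.castSucc ⟶ F l.succ
  mono : ∀ l, Mono (f l)
  semistable : ∀ l, IsZSemistable Z (cokernel (f l))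
  phases_strictAnti : ∀ l l' : Fin d, l < l' →
    phase (Z (K0.cls (cokernel (f l')))) < phase (Z (K0.cls (cokernel (f l))))

/-! ### Auxiliary lemmas -/

lemma cls_eq_add [Abelian C] (S : ShortComplex C) (h : S.ShortExact) :
    K0.cls S.X₂ = K0.cls S.X₁ + K0.cls S.X₃ := by
  have h1 : FreeAbelianGroup.of S.X₂ - FreeAbelianGroup.of S.X₁ - FreeAbelianGroup.of S.X₃
      ∈ K0Relations C := AddSubgroup.subset_closure ⟨S, h, rfl⟩
  show QuotientAddGroup.mk _ = QuotientAddGroup.mk _ + QuotientAddGroup.mk _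
  change (QuotientAddGroup.mk _ : FreeAbelianGroup C ⧸ K0Relations C) =
    QuotientAddGroup.mk (FreeAbelianGroup.of S.X₁ + FreeAbelianGroup.of S.X₃)
  rw [QuotientAddGroup.eq]
  convert neg_mem h1 using 1
  abel

lemma cls_of_isZero [Abelian C] {X : C} (h : IsZero X) : K0.cls X = 0 := by
  have hz : (𝟙 X) ≫ (𝟙 X) = 0 := h.eq_of_src _ _
  have hT : (ShortComplex.mk (𝟙 X) (𝟙 X) hz).ShortExact :=
    { exact := (ShortComplex.exact_iff_epi _ (h.eq_of_src _ _)).mpr inferInstance,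
      mono_f := inferInstance, epi_g := inferInstance }
  have := cls_eq_add _ hT
  exact (right_eq_add.mp this)

lemma cls_of_iso [Abelian C] {X Y : C} (e : X ≅ Y) : K0.cls X = K0.cls Y := by
  have hepi : Epi (0 : Y ⟶ (0 : C)) := ⟨fun _ _ _ => (isZero_zero C).eq_of_src _ _⟩
  have hT : (ShortComplex.mk e.hom (0 : Y ⟶ (0 : C)) (by simp)).ShortExact :=
    { exact := (ShortComplex.exact_iff_epi _ rfl).mpr inferInstance,
      mono_f := inferInstance, epi_g := hepi }
  have := cls_eq_add _ hT
  simpa [cls_of_isZero (isZero_zero C)] using this.symm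

lemma cross_neg {z w : ℂ} (hz : 0 < z.arg) (hw : 0 < w.arg) (h : z.arg < w.arg) :
    z.im * w.re - z.re * w.im < 0 := by
  have hz0 : z ≠ 0 := by rintro rfl; simp [Complex.arg_zero] at hz
  have hw0 : w ≠ 0 := by rintro rfl; simp [Complex.arg_zero] at hw
  have h1 : z.im * w.re - z.re * w.im
      = ‖z‖ * ‖w‖ * Real.sin (z.arg - w.arg) := by
    rw [Real.sin_sub, ← Complex.norm_mul_sin_arg z, ← Complex.norm_mul_cos_arg z,
        ← Complex.norm_mul_sin_arg w, ← Complex.norm_mul_cos_arg w]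
    ring
  rw [h1]
  apply mul_neg_of_pos_of_neg
  · exact mul_pos (norm_pos_iff.mpr hz0) (norm_pos_iff.mpr hw0)
  · apply Real.sin_neg_of_neg_of_neg_pi_lt (by linarith)
    have := Complex.arg_le_pi w
    linarith

lemma phase_lt_phase {z w : ℂ} (h : phase z < phase w) : z.arg < w.arg :=
  (div_lt_div_iff_of_pos_right Real.pi_pos).mp h

/-- The canonical short exact sequence `0 → ker f → X → coim f → 0`. -/
lemma ses_shortExact [Abelian C] {X Y : C} (f : X ⟶ Y) :
    (ShortComplex.mk (kernel.ι f) (Abelian.coimage.π f) (cokernel.condition _)).ShortExact :=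
  { exact := ShortComplex.exact_of_g_is_cokernel _ (cokernelIsCokernel _),
    mono_f := inferInstance, epi_g := inferInstance }

lemma isIso_of_isZStable [Abelian C] (Z : K0 C →+ ℂ) (hZ : IsStabilityFunction Z) (S : C)
    (hS : IsZStable Z S) (f : S ⟶ S) (hf : f ≠ 0) : IsIso f := by
  by_contra hni
  by_cases hm : Mono f
  · exact absurd (hS.2 f hm hS.1 hni) (lt_irrefl _)
  have hK : ¬ IsZero (kernel f) := fun h => hm (Preadditive.mono_of_isZero_kernel f h)
  have hι : ¬ IsIso (kernel.ι f) := by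
    intro h
    apply hf
    rw [← cancel_epi (kernel.ι f), kernel.condition, comp_zero]
  have hKlt := hS.2 (kernel.ι f) inferInstance hK hι
  have hI : ¬ IsZero (Abelian.coimage f) := by
    intro h
    apply hf
    rw [← Abelian.coimage.fac f, h.eq_of_src (Abelian.factorThruCoimage f) 0, comp_zero]
  have hses : K0.cls S = K0.cls (kernel f) + K0.cls (Abelian.coimage f) :=
    cls_eq_add _ (ses_shortExact f)
  have hsum : Z (K0.cls S) = Z (K0.cls (kernel f)) + Z (K0.cls (Abelian.coimage f)) := by
    rw [hses, map_add]
  have ha : 0 < (Z (K0.cls (kernel f))).arg := hZ _ hK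
  have hs : 0 < (Z (K0.cls S)).arg := hZ _ hS.1
  by_cases hu : IsIso (Abelian.factorThruCoimage f)
  · have hIS : K0.cls (Abelian.coimage f) = K0.cls S :=
      cls_of_iso (asIso (Abelian.factorThruCoimage f))
    rw [hIS] at hsum
    have : Z (K0.cls (kernel f)) = 0 := right_eq_add.mp hsum
    rw [this] at ha
    simp [Complex.arg_zero] at ha
  · have hIlt := hS.2 (Abelian.factorThruCoimage f) inferInstance hI hu
    have hb : 0 < (Z (K0.cls (Abelian.coimage f))).arg := hZ _ hI
    have c1 := cross_neg ha hs (phase_lt_phase hKlt)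
    have c2 := cross_neg hb hs (phase_lt_phase hIlt)
    have hre : (Z (K0.cls S)).re
        = (Z (K0.cls (kernel f))).re + (Z (K0.cls (Abelian.coimage f))).re := by
      rw [hsum, Complex.add_re]
    have him : (Z (K0.cls S)).im
        = (Z (K0.cls (kernel f))).im + (Z (K0.cls (Abelian.coimage f))).im := by
      rw [hsum, Complex.add_im]
    rw [hre, him] at c1 c2
    nlinarith [c1, c2]

/-- **Lemma.** Let `C` be a Hom-finite `k`-linear abelian category over an algebraically
closed field `k`, and let `Z` be a stability function on `C`. Any `Z`-stable object `S`
has endomorphism algebra `End S ≅ k`. -/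
theorem endAlgEquiv_of_isZStable {k : Type v} [Field k] [IsAlgClosed k]
    [Abelian C] [Linear k C] (homFinite : ∀ X Y : C, FiniteDimensional k (X ⟶ Y))
    (Z : K0 C →+ ℂ) (hZ : IsStabilityFunction Z) (S : C) (hS : IsZStable Z S) :
    Nonempty (End S ≃ₐ[k] k) := by
  have ntriv : Nontrivial (End S) := by
    refine ⟨𝟙 S, 0, fun h => hS.1 ((IsZero.iff_id_eq_zero S).mpr h)⟩
  have fd : FiniteDimensional k (End S) := homFinite S S
  have main : ∀ a : End S, ∃ c : k, algebraMap k (End S) c = a := by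
    intro a
    obtain ⟨c, hc⟩ := spectrum.nonempty_of_isAlgClosed_of_finiteDimensional k a
    rw [spectrum.mem_iff] at hc
    refine ⟨c, ?_⟩
    by_contra hne
    apply hc
    have h0 : (algebraMap k (End S) c - a : End S) ≠ 0 :=
      sub_ne_zero.mpr hne
    have hiso : IsIso ((algebraMap k (End S) c - a : End S) : S ⟶ S) :=
      isIso_of_isZStable Z hZ S hS _ h0
    exact ⟨⟨_, inv ((algebraMap k (End S) c - a : End S) : S ⟶ S),
      IsIso.inv_hom_id _, IsIso.hom_inv_id _⟩, rfl⟩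
  have inj : Function.Injective (algebraMap k (End S)) := (algebraMap k (End S)).injective
  exact ⟨(AlgEquiv.ofBijective (Algebra.ofId k (End S))
    ⟨inj, fun a => (main a).imp fun c hc => hc⟩).symm⟩

end HWPaper
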